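/- Explicit orthogonal decomposition of pairwise rank information: for distinct a, b ∈ [n], set x_{a≻b} := δ_{ab} − δ_{ba} ∈ L(Γ({a,b})) (so that x_{b≻a} = −x_{a≻b}), and let H² := {F : Γ² → ℝ with F(ab) + F(ba) = 0 for every pair {a,b} ⊆ [n]}, where Γ² is the set of all two-letter duplicate-free words on [n], equipped with the inner product ⟨F,G⟩ := Σ_{π∈Γ²} F(π)G(π). Define e_a := Σ_{b≠a} x_{a≻b} for a ∈ [n], f_{(a,b)} := Σ_{c∉{a,b}} (x_{a≻b} + x_{b≻c} + x_{c≻a}) for a ≠ b, and set H²₁ := span{e_a : a ∈ [n]}, H²₂ := span{f_{(a,b)} : a,b ∈ [n], a ≠ b}. Then H²₁ and H²₂ are orthogonal, H² = H²₁ ⊕ H²₂, dim H²₁ = n−1, dim H²₂ = (n−1)(n−2)/2, and moreover H²₁ = {Σ_{1≤i<j≤n} (s_i − s_j)·x_{i≻j} : s ∈ ℝⁿ} (the space of gradient edge flows). -/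

import Mathlib

open Finset
open scoped List

abbrev Word (n : ℕ) := List (Fin n)

/-- `Γ(A)`: duplicate-free words whose set of letters is exactly `A`. -/
noncomputable def rankings (n : ℕ) (A : Finset (Fin n)) : Finset (Word n) :=
  A.toList.permutations.toFinset

/-- All duplicate-free words on `[n]`. -/
noncomputable def allWords (n : ℕ) : Finset (Word n) :=
  Finset.univ.biUnion fun A : Finset (Fin n) => rankings n A

def IsRanking {n : ℕ} (A : Finset (Fin n)) (w : Word n) : Prop :=
  w.Nodup ∧ w.toFinset = A

instance {n : ℕ} (A : Finset (Fin n)) (w : Word n) : Decidable (IsRanking A w) :=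
  inferInstanceAs (Decidable (w.Nodup ∧ w.toFinset = A))

/-- Membership in `L(Γ(A))`: functions supported on `Γ(A)`. -/
def MemL {n : ℕ} (A : Finset (Fin n)) (F : Word n → ℝ) : Prop :=
  ∀ w, F w ≠ 0 → IsRanking A w

/-- Marginal operator `M_B` (with the convention `M_∅ F = (Σ F)·δ_0̄`). -/
noncomputable def marg {n : ℕ} (B : Finset (Fin n)) (F : Word n → ℝ) : Word n → ℝ :=
  fun π => if IsRanking B π then ∑ σ ∈ allWords n, (if π <+ σ then F σ else 0) else 0

/-- Membership in the localization space `H_B` (for `B = ∅` this is `L(Γ(∅)) = ℝ·δ_0̄`). -/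
def MemH {n : ℕ} (B : Finset (Fin n)) (F : Word n → ℝ) : Prop :=
  MemL B F ∧
    (∀ B' : Finset (Fin n), B' ⊂ B → 2 ≤ B'.card → marg B' F = 0) ∧
    (2 ≤ B.card → ∑ π ∈ rankings n B, F π = 0)

/-- `P̄(A) = {B ⊆ A : |B| ≥ 2} ∪ {∅}`. -/
def Pbar {n : ℕ} (A : Finset (Fin n)) : Finset (Finset (Fin n)) :=
  A.powerset.filter fun B => 2 ≤ B.card ∨ B = ∅

/-- Synthesis operator `φ_A`. -/
noncomputable def synth {n : ℕ} (A : Finset (Fin n)) (F : Word n → ℝ) : Word n → ℝ :=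
  fun σ =>
    if IsRanking A σ then
      F [] / (Nat.factorial A.card : ℝ) +
        ∑ π ∈ allWords n,
          (if π ≠ [] ∧ π <:+: σ then F π / (Nat.factorial (A.card - π.length + 1) : ℝ) else 0)
    else 0

/-- Dirac function `δ_π`. -/
noncomputable def dirac {n : ℕ} (π : Word n) : Word n → ℝ :=
  fun w => if w = π then 1 else 0

/-- `σ|_C`: the induced word of `σ` on `C`. -/
def restrictWord {n : ℕ} (σ : Word n) (C : Finset (Fin n)) : Word n :=
  σ.filter fun a => decide (a ∈ C)

/-- `Γ²`: two-letter duplicate-free words on `[n]`. -/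
noncomputable def gamma2 (n : ℕ) : Finset (Word n) :=
  (allWords n).filter fun w => w.length = 2

/-- `x_{a≻b} = δ_{ab} − δ_{ba}`. -/
noncomputable def xab {n : ℕ} (a b : Fin n) : Word n → ℝ :=
  dirac [a, b] - dirac [b, a]

/-- `e_a = Σ_{b ≠ a} x_{a≻b}`. -/
noncomputable def evec {n : ℕ} (a : Fin n) : Word n → ℝ :=
  ∑ b ∈ Finset.univ.erase a, xab a b

/-- `f_{(a,b)} = Σ_{c ∉ {a,b}} (x_{a≻b} + x_{b≻c} + x_{c≻a})`. -/
noncomputable def fvec {n : ℕ} (a b : Fin n) : Word n → ℝ :=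
  ∑ c ∈ Finset.univ \ {a, b}, (xab a b + xab b c + xab c a)

/-- `H²`: functions on `Γ²` with `F(ab) + F(ba) = 0` for every pair `{a,b}`. -/
noncomputable def H2space (n : ℕ) : Submodule ℝ (Word n → ℝ) where
  carrier := {F | (∀ w, F w ≠ 0 → w.Nodup ∧ w.length = 2) ∧
    ∀ a b : Fin n, a ≠ b → F [a, b] + F [b, a] = 0}
  zero_mem' := by
    refine ⟨?_, fun a b _ => by simp⟩
    intro w hw; simp at hw
  add_mem' := by
    rintro F G ⟨hF1, hF2⟩ ⟨hG1, hG2⟩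
    refine ⟨?_, fun a b hab => ?_⟩
    · intro w hw
      by_contra h
      have h1 : F w = 0 := by by_contra h'; exact h (hF1 w h')
      have h2 : G w = 0 := by by_contra h'; exact h (hG1 w h')
      exact hw (by simp [h1, h2])
    · have hF := hF2 a b hab
      have hG := hG2 a b hab
      simp only [Pi.add_apply]
      linarith
  smul_mem' := by
    rintro c F ⟨hF1, hF2⟩
    refine ⟨?_, fun a b hab => ?_⟩
    · intro w hw
      by_contra h
      have h1 : F w = 0 := by by_contra h'; exact h (hF1 w h')
      exact hw (by simp [h1])
    · have hF := hF2 a b hab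
      simp only [Pi.smul_apply, smul_eq_mul]
      rw [← mul_add, hF, mul_zero]

/-- `H²₁ = span{e_a : a ∈ [n]}`. -/
noncomputable def H21 (n : ℕ) : Submodule ℝ (Word n → ℝ) :=
  Submodule.span ℝ (Set.range (evec (n := n)))

/-- `H²₂ = span{f_{(a,b)} : a ≠ b}`. -/
noncomputable def H22 (n : ℕ) : Submodule ℝ (Word n → ℝ) :=
  Submodule.span ℝ {F : Word n → ℝ | ∃ a b : Fin n, a ≠ b ∧ F = fvec a b}
section Aux
variable {n : ℕ}

lemma xab_self (a : Fin n) : xab a a = 0 := by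
  funext w; simp [xab, dirac]

lemma xab_swap (a b : Fin n) : xab b a = - xab a b := by
  funext w; simp only [xab, Pi.neg_apply, Pi.sub_apply]; ring

lemma xab_eval (a b u v : Fin n) :
    xab a b [u, v] = (if u = a ∧ v = b then (1:ℝ) else 0) - (if u = b ∧ v = a then 1 else 0) := by
  simp [xab, dirac]

lemma mem_allWords {w : Word n} : w ∈ allWords n ↔ w.Nodup := by
  constructor
  · intro h
    simp only [allWords, Finset.mem_biUnion, rankings, List.mem_toFinset] at h
    obtain ⟨A, -, h⟩ := h
    exact (List.mem_permutations.mp h).symm.nodup (Finset.nodup_toList A)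
  · intro h
    simp only [allWords, Finset.mem_biUnion, rankings, List.mem_toFinset]
    exact ⟨w.toFinset, Finset.mem_univ _, List.mem_permutations.mpr
      (List.toFinset_toList h).symm⟩

lemma mem_gamma2 {w : Word n} : w ∈ gamma2 n ↔ w.Nodup ∧ w.length = 2 := by
  simp [gamma2, mem_allWords, and_comm]

end Aux
section Aux2
variable {n : ℕ}

lemma evec_eval (a u v : Fin n) (huv : u ≠ v) :
    evec a [u, v] = (if u = a then (1:ℝ) else 0) - (if v = a then 1 else 0) := by
  simp only [evec, Finset.sum_apply, xab_eval]
  rw [Finset.sum_sub_distrib]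
  congr 1
  · by_cases hu : u = a
    · subst hu
      have hv : v ≠ u := fun h => huv h.symm
      simp [Finset.sum_ite_eq', hv, true_and]
    · simp [hu]
  · by_cases hv : v = a
    · subst hv
      simp [Finset.sum_ite_eq', huv, and_true]
    · simp [hv]

lemma evec_eval_diag (a u : Fin n) : evec a [u, u] = 0 := by
  simp only [evec, Finset.sum_apply, xab_eval]
  apply Finset.sum_eq_zero
  intro b hb
  exact sub_eq_zero.mpr (if_congr and_comm rfl rfl)
section Aux3
variable {n : ℕ}

lemma two_le_of_ne {a b : Fin n} (hab : a ≠ b) : 2 ≤ n := by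
  have : 1 < Fintype.card (Fin n) := Fintype.one_lt_card_iff_nontrivial.mpr ⟨⟨a, b, hab⟩⟩
  simp at this; omega

lemma fvec_eq {a b : Fin n} (hab : a ≠ b) :
    fvec a b = (n : ℝ) • xab a b - evec a + evec b := by
  have hn : 2 ≤ n := two_le_of_ne hab
  have hmem : a ∈ Finset.univ.erase b := Finset.mem_erase.mpr ⟨hab, Finset.mem_univ a⟩
  have hmem' : b ∈ Finset.univ.erase a := Finset.mem_erase.mpr ⟨hab.symm, Finset.mem_univ b⟩
  have hset1 : (Finset.univ \ {a, b} : Finset (Fin n)) = (Finset.univ.erase b).erase a := by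
    ext c; simp [and_comm]
  have hset2 : (Finset.univ \ {a, b} : Finset (Fin n)) = (Finset.univ.erase a).erase b := by
    ext c; simp [and_comm]
  have hcard : (Finset.univ \ ({a, b} : Finset (Fin n))).card = n - 2 := by
    rw [Finset.card_sdiff_of_subset (Finset.subset_univ _), Finset.card_univ, Fintype.card_fin,
      Finset.card_insert_of_notMem (by simp [hab]), Finset.card_singleton]
  have h1 : ∑ c ∈ Finset.univ \ {a, b}, xab b c = evec b - xab b a := by
    rw [hset1, Finset.sum_erase_eq_sub hmem]; rfl
  have h2 : ∑ c ∈ Finset.univ \ {a, b}, xab c a = -evec a - xab b a := by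
    rw [hset2, Finset.sum_erase_eq_sub hmem']
    congr 1
    rw [show evec a = ∑ c ∈ Finset.univ.erase a, xab a c from rfl, ← Finset.sum_neg_distrib]
    exact Finset.sum_congr rfl fun c _ => xab_swap a c
  have h3 : ∑ _c ∈ Finset.univ \ ({a, b} : Finset (Fin n)), xab a b = (n - 2) • xab a b := by
    rw [Finset.sum_const, hcard]
  rw [show fvec a b = (∑ _c ∈ Finset.univ \ ({a, b} : Finset (Fin n)), xab a b)
      + (∑ c ∈ Finset.univ \ {a, b}, xab b c) + (∑ c ∈ Finset.univ \ {a, b}, xab c a) by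
    simp [fvec, Finset.sum_add_distrib]]
  rw [h1, h2, h3, show xab b a = -xab a b from xab_swap a b]
  have hns : (n : ℝ) • xab a b = ((n - 2 : ℕ) + 2) • xab a b := by
    rw [Nat.sub_add_cancel hn, Nat.cast_smul_eq_nsmul]
  rw [hns]
  module

lemma xab_mem {a b : Fin n} (hab : a ≠ b) : xab a b ∈ H2space n := by
  constructor
  · intro w hw
    by_cases h1 : w = [a, b]
    · subst h1; exact ⟨by simp [hab], rfl⟩
    by_cases h2 : w = [b, a]
    · subst h2; exact ⟨by simp [hab.symm], rfl⟩
    · exact absurd (by simp [xab, dirac, h1, h2]) hw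
  · intro u v _
    rw [xab_eval, xab_eval,
      show (if u = a ∧ v = b then (1:ℝ) else 0) = (if v = b ∧ u = a then 1 else 0) from
        if_congr and_comm rfl rfl,
      show (if u = b ∧ v = a then (1:ℝ) else 0) = (if v = a ∧ u = b then 1 else 0) from
        if_congr and_comm rfl rfl]
    ring

lemma evec_mem (a : Fin n) : evec a ∈ H2space n :=
  Submodule.sum_mem _ fun b hb => xab_mem (Finset.ne_of_mem_erase hb).symm

lemma fvec_mem {a b : Fin n} (hab : a ≠ b) : fvec a b ∈ H2space n := by
  rw [fvec_eq hab]
  exact Submodule.add_mem _ (Submodule.sub_mem _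
    (Submodule.smul_mem _ _ (xab_mem hab)) (evec_mem a)) (evec_mem b)

end Aux3
section Aux4
variable {n : ℕ}

lemma H2_repr {F : Word n → ℝ} (hF : F ∈ H2space n) :
    F = ∑ a : Fin n, ∑ b : Fin n, (F [a, b] / 2) • xab a b := by
  obtain ⟨hsupp, hanti⟩ := hF
  funext w
  simp only [Finset.sum_apply, Pi.smul_apply, smul_eq_mul, xab, Pi.sub_apply, dirac]
  by_cases hw : ∃ u v : Fin n, w = [u, v]
  · obtain ⟨u, v, rfl⟩ := hw
    simp only [List.cons.injEq, and_true, mul_sub, mul_ite, mul_one, mul_zero,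
      Finset.sum_sub_distrib, ite_and, Finset.sum_ite_irrel, Finset.sum_const_zero,
      Finset.sum_ite_eq, Finset.mem_univ, if_true]
    by_cases huv : u = v
    · subst huv
      have h0 : F [u, u] = 0 := by
        by_contra h
        exact (by simp : ¬ ([u, u] : Word n).Nodup) (hsupp _ h).1
      simp [h0]
    · have := hanti u v huv
      linarith
  · have hFw : F w = 0 := by
      by_contra h
      obtain ⟨u, v, rfl⟩ := List.length_eq_two.mp (hsupp w h).2
      exact hw ⟨u, v, rfl⟩
    rw [hFw]
    symm
    apply Finset.sum_eq_zero; intro a _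
    apply Finset.sum_eq_zero; intro b _
    have h1 : w ≠ [a, b] := fun h => hw ⟨a, b, h⟩
    have h2 : w ≠ [b, a] := fun h => hw ⟨b, a, h⟩
    simp [h1, h2]

lemma evec_expand (a : Fin n) : evec a = ∑ b : Fin n, xab a b := by
  rw [show evec a = ∑ b ∈ Finset.univ.erase a, xab a b from rfl,
    Finset.sum_erase_eq_sub (Finset.mem_univ a), xab_self, sub_zero]

lemma sum_evec_zero : ∑ a : Fin n, evec a = 0 := by
  have h1 : ∑ a : Fin n, evec a = ∑ a : Fin n, ∑ b : Fin n, xab a b :=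
    Finset.sum_congr rfl fun a _ => evec_expand a
  have h2 : ∑ a : Fin n, ∑ b : Fin n, xab a b = -∑ a : Fin n, ∑ b : Fin n, xab a b := by
    nth_rewrite 1 [Finset.sum_comm]
    rw [← Finset.sum_neg_distrib]
    refine Finset.sum_congr rfl fun a _ => ?_
    rw [← Finset.sum_neg_distrib]
    exact Finset.sum_congr rfl fun b _ => xab_swap a b
  have h3 : (2:ℝ) • ∑ a : Fin n, ∑ b : Fin n, xab a b = 0 := by
    rw [two_smul]; nth_rewrite 2 [h2]; abel
  rw [h1]
  exact (smul_eq_zero.mp h3).resolve_left two_ne_zero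

lemma xab_mem_sup {a b : Fin n} (hab : a ≠ b) : xab a b ∈ H21 n ⊔ H22 n := by
  have hn0 : (n : ℝ) ≠ 0 := by
    have := two_le_of_ne hab; positivity
  have hx : xab a b = (n : ℝ)⁻¹ • (fvec a b + evec a - evec b) := by
    rw [fvec_eq hab]
    rw [show (n:ℝ) • xab a b - evec a + evec b + evec a - evec b = (n:ℝ) • xab a b by abel,
      smul_smul, inv_mul_cancel₀ hn0, one_smul]
  rw [hx]
  refine Submodule.smul_mem _ _ (Submodule.sub_mem _ (Submodule.add_mem _ ?_ ?_) ?_)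
  · exact Submodule.mem_sup_right (Submodule.subset_span ⟨a, b, hab, rfl⟩)
  · exact Submodule.mem_sup_left (Submodule.subset_span ⟨a, rfl⟩)
  · exact Submodule.mem_sup_left (Submodule.subset_span ⟨b, rfl⟩)

lemma sup_eq : H21 n ⊔ H22 n = H2space n := by
  apply le_antisymm
  · apply sup_le
    · rw [H21, Submodule.span_le]
      rintro F ⟨a, rfl⟩
      exact evec_mem a
    · rw [H22, Submodule.span_le]
      rintro F ⟨a, b, hab, rfl⟩
      exact fvec_mem hab
  · intro F hF
    rw [H2_repr hF]
    refine Submodule.sum_mem _ fun a _ => Submodule.sum_mem _ fun b _ =>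
      Submodule.smul_mem _ _ ?_
    rcases eq_or_ne a b with rfl | hab
    · rw [xab_self]; exact Submodule.zero_mem _
    · exact xab_mem_sup hab

end Aux4
section Aux5
variable {n : ℕ}

lemma hswap_sum (s : Fin n → ℝ) :
    ∑ a : Fin n, ∑ b : Fin n, s b • xab a b
      = - ∑ a : Fin n, ∑ b : Fin n, s a • xab a b := by
  rw [Finset.sum_comm, ← Finset.sum_neg_distrib]
  refine Finset.sum_congr rfl fun u _ => ?_
  rw [← Finset.sum_neg_distrib]
  refine Finset.sum_congr rfl fun v _ => ?_
  rw [xab_swap u v, smul_neg]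

lemma grad_eq (s : Fin n → ℝ) :
    ∑ a : Fin n, s a • evec a =
    ∑ i : Fin n, ∑ j : Fin n, (if i < j then (s i - s j) • xab i j else 0) := by
  have hL : ∑ a : Fin n, s a • evec a = ∑ a : Fin n, ∑ b : Fin n, s a • xab a b := by
    refine Finset.sum_congr rfl fun a _ => ?_
    rw [evec_expand, Finset.smul_sum]
  have hsym : ∑ i : Fin n, ∑ j : Fin n, (if j < i then (s i - s j) • xab i j else 0)
      = ∑ i : Fin n, ∑ j : Fin n, (if i < j then (s i - s j) • xab i j else 0) := by
    rw [Finset.sum_comm]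
    refine Finset.sum_congr rfl fun u _ => Finset.sum_congr rfl fun v _ => ?_
    by_cases h : u < v
    · rw [if_pos h, if_pos h, xab_swap u v, smul_neg, ← neg_smul, neg_sub]
    · rw [if_neg h, if_neg h]
  have hdouble : ∑ i : Fin n, ∑ j : Fin n, (s i - s j) • xab i j
      = (∑ a : Fin n, ∑ b : Fin n, s a • xab a b)
        + (∑ a : Fin n, ∑ b : Fin n, s a • xab a b) := by
    simp only [sub_smul, Finset.sum_sub_distrib]
    rw [hswap_sum]
    abel
  have hdouble2 : ∑ i : Fin n, ∑ j : Fin n, (s i - s j) • xab i j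
      = (∑ i : Fin n, ∑ j : Fin n, (if i < j then (s i - s j) • xab i j else 0))
        + (∑ i : Fin n, ∑ j : Fin n, (if i < j then (s i - s j) • xab i j else 0)) := by
    have hsplit : ∀ i j : Fin n, (s i - s j) • xab i j =
        (if i < j then (s i - s j) • xab i j else 0)
          + (if j < i then (s i - s j) • xab i j else 0) := by
      intro i j
      rcases lt_trichotomy i j with h | rfl | h
      · rw [if_pos h, if_neg (asymm h), add_zero]
      · simp [sub_self]
      · rw [if_neg (asymm h), if_pos h, zero_add]
    calc ∑ i : Fin n, ∑ j : Fin n, (s i - s j) • xab i j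
        = ∑ i : Fin n, ∑ j : Fin n, ((if i < j then (s i - s j) • xab i j else 0)
          + (if j < i then (s i - s j) • xab i j else 0)) :=
          Finset.sum_congr rfl fun i _ => Finset.sum_congr rfl fun j _ => hsplit i j
      _ = _ := by
          simp only [Finset.sum_add_distrib]
          rw [hsym]
  have h2 : (2:ℝ) • (∑ a : Fin n, ∑ b : Fin n, s a • xab a b)
      = (2:ℝ) • ∑ i : Fin n, ∑ j : Fin n, (if i < j then (s i - s j) • xab i j else 0) := by
    rw [two_smul, two_smul, ← hdouble, hdouble2]
  rw [hL]
  exact smul_right_injective (Word n → ℝ) two_ne_zero h2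

lemma H21_carrier_eq :
    (H21 n : Set (Word n → ℝ)) = {F : Word n → ℝ | ∃ s : Fin n → ℝ,
      F = ∑ i : Fin n, ∑ j : Fin n, (if i < j then (s i - s j) • xab i j else 0)} := by
  ext F
  simp only [SetLike.mem_coe, Set.mem_setOf_eq, H21]
  rw [Submodule.mem_span_range_iff_exists_fun]
  constructor
  · rintro ⟨s, hs⟩
    exact ⟨s, by rw [← hs, grad_eq]⟩
  · rintro ⟨s, rfl⟩
    exact ⟨s, grad_eq s⟩

end Aux5
section Aux6
variable {n : ℕ}

lemma gamma2_eq : gamma2 n = Finset.image (fun p : Fin n × Fin n => ([p.1, p.2] : Word n))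
    (Finset.univ.filter fun p => p.1 ≠ p.2) := by
  ext w
  rw [mem_gamma2]
  simp only [Finset.mem_image, Finset.mem_filter, Finset.mem_univ, true_and]
  constructor
  · rintro ⟨hnd, hlen⟩
    obtain ⟨u, v, rfl⟩ := List.length_eq_two.mp hlen
    have huv : u ≠ v := by simpa using hnd
    exact ⟨(u, v), huv, rfl⟩
  · rintro ⟨⟨u, v⟩, huv, rfl⟩
    exact ⟨by simpa using huv, rfl⟩

lemma sum_gamma2 (f : Word n → ℝ) :
    ∑ π ∈ gamma2 n, f π = ∑ u : Fin n, ∑ v : Fin n, (if u ≠ v then f [u, v] else 0) := by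
  rw [gamma2_eq, Finset.sum_image (by rintro ⟨a,b⟩ - ⟨c,d⟩ - h; simpa using h),
    Finset.sum_filter]
  exact Fintype.sum_prod_type (f := fun p : Fin n × Fin n => if p.1 ≠ p.2 then f [p.1, p.2] else 0)

lemma B_evec_fvec (a c d : Fin n) (hcd : c ≠ d) :
    ∑ π ∈ gamma2 n, evec a π * fvec c d π = 0 := by
  rw [sum_gamma2]
  have key : ∀ u v : Fin n, (if u ≠ v then evec a [u,v] * fvec c d [u,v] else 0)
      = ((if u = a then (1:ℝ) else 0) - (if v = a then 1 else 0)) *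
        ((n:ℝ) * ((if u = c ∧ v = d then 1 else 0) - (if u = d ∧ v = c then 1 else 0))
         - ((if u = c then 1 else 0) - (if v = c then 1 else 0))
         + ((if u = d then 1 else 0) - (if v = d then 1 else 0))) := by
    intro u v
    rcases eq_or_ne u v with rfl | huv
    · simp [hcd, fun h : u = c => fun h' : u = d => hcd (h ▸ h' ▸ rfl)]
    · rw [if_pos huv, fvec_eq hcd]
      simp only [Pi.add_apply, Pi.sub_apply, Pi.smul_apply, smul_eq_mul]
      rw [evec_eval a u v huv, evec_eval c u v huv, evec_eval d u v huv, xab_eval]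
  simp only [key]
  simp only [mul_sub, sub_mul, mul_add, add_mul, mul_ite, ite_mul, mul_one, mul_zero, one_mul,
    zero_mul, ite_and, Finset.sum_add_distrib, Finset.sum_sub_distrib, Finset.sum_ite_irrel,
    Finset.sum_const_zero, Finset.sum_ite_eq, Finset.sum_ite_eq', Finset.mem_univ, if_true,
    Finset.sum_const, Finset.card_univ, Fintype.card_fin, smul_eq_mul, nsmul_eq_mul]
  ring

end Aux6
section Aux7
variable {n : ℕ}

lemma orthG (a : Fin n) {G : Word n → ℝ} (hG : G ∈ H22 n) :
    ∑ π ∈ gamma2 n, evec a π * G π = 0 := by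
  induction hG using Submodule.span_induction with
  | mem x hx => obtain ⟨c, d, hcd, rfl⟩ := hx; exact B_evec_fvec a c d hcd
  | zero => simp
  | add x y hx hy ihx ihy =>
      have : ∀ π : Word n, evec a π * (x + y) π = evec a π * x π + evec a π * y π :=
        fun π => by simp [mul_add]
      simp only [this, Finset.sum_add_distrib, ihx, ihy, add_zero]
  | smul r x hx ih =>
      have : ∀ π : Word n, evec a π * (r • x) π = r * (evec a π * x π) :=
        fun π => by simp; ring
      simp only [this, ← Finset.mul_sum, ih, mul_zero]

lemma orth {F : Word n → ℝ} (hF : F ∈ H21 n) {G : Word n → ℝ} (hG : G ∈ H22 n) :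
    ∑ π ∈ gamma2 n, F π * G π = 0 := by
  induction hF using Submodule.span_induction with
  | mem x hx => obtain ⟨a, rfl⟩ := hx; exact orthG a hG
  | zero => simp
  | add x y hx hy ihx ihy =>
      have : ∀ π : Word n, (x + y) π * G π = x π * G π + y π * G π :=
        fun π => by simp [add_mul]
      simp only [this, Finset.sum_add_distrib, ihx, ihy, add_zero]
  | smul r x hx ih =>
      have : ∀ π : Word n, (r • x) π * G π = r * (x π * G π) :=
        fun π => by simp; ring
      simp only [this, ← Finset.mul_sum, ih, mul_zero]

lemma inf_eq : H21 n ⊓ H22 n = ⊥ := by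
  rw [eq_bot_iff]
  rintro F ⟨h1, h2⟩
  have h0 := orth h1 h2
  have hF2 : F ∈ H2space n := by rw [← sup_eq]; exact Submodule.mem_sup_left h1
  have hz : ∀ π ∈ gamma2 n, F π = 0 := by
    intro π hπ
    have := (Finset.sum_eq_zero_iff_of_nonneg fun π _ => mul_self_nonneg (F π)).mp h0 π hπ
    exact mul_self_eq_zero.mp this
  rw [Submodule.mem_bot]
  funext w
  by_cases hFw : F w = 0
  · exact hFw
  · exact absurd hFw (by simpa using hz w (mem_gamma2.mpr (hF2.1 w hFw)))

end Aux7
section Aux8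
variable {n : ℕ}

lemma finrank_H21 (hn : 2 ≤ n) : Module.finrank ℝ (H21 n) = n - 1 := by
  have npos : 0 < n := by omega
  set z : Fin n := ⟨0, npos⟩ with hzdef
  set fam : {a : Fin n // a ≠ z} → (Word n → ℝ) := fun a => evec a.1 with hfam
  have hspan : H21 n = Submodule.span ℝ (Set.range fam) := by
    apply le_antisymm
    · rw [H21, Submodule.span_le]
      rintro F ⟨a, rfl⟩
      by_cases ha : a = z
      · subst ha
        have hz : evec z = - ∑ b ∈ Finset.univ.erase z, evec b := by
          apply eq_neg_of_add_eq_zero_left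
          rw [Finset.add_sum_erase _ _ (Finset.mem_univ z)]
          exact sum_evec_zero
        rw [hz]
        refine Submodule.neg_mem _ (Submodule.sum_mem _ fun b hb => ?_)
        exact Submodule.subset_span ⟨⟨b, (Finset.mem_erase.mp hb).1⟩, rfl⟩
      · exact Submodule.subset_span ⟨⟨a, ha⟩, rfl⟩
    · rw [Submodule.span_le]
      rintro F ⟨a, rfl⟩
      exact Submodule.subset_span ⟨a.1, rfl⟩
  have hind : LinearIndependent ℝ fam := by
    set T : (Word n → ℝ) →ₗ[ℝ] ({a : Fin n // a ≠ z} → ℝ) :=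
      { toFun := fun F u => F [u.1, z]
        map_add' := fun _ _ => rfl
        map_smul' := fun _ _ => rfl } with hT
    apply LinearIndependent.of_comp T
    have heq : ⇑T ∘ fam = fun a : {a : Fin n // a ≠ z} => (Pi.single a (1:ℝ)) := by
      funext a u
      show evec a.1 [u.1, z] = _
      rw [evec_eval a.1 u.1 z u.2, Pi.single_apply]
      have hza : z = a.1 ↔ False := ⟨fun h => a.2 h.symm, False.elim⟩
      have hua : u.1 = a.1 ↔ u = a := ⟨fun h => Subtype.ext h, fun h => h ▸ rfl⟩
      simp [hza, hua]
    rw [heq, show (fun a : {a : Fin n // a ≠ z} => (Pi.single a (1:ℝ) : _)) =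
        ⇑(Pi.basisFun ℝ {a : Fin n // a ≠ z}) from
      funext fun a => (Pi.basisFun_apply ℝ _ a).symm]
    exact (Pi.basisFun ℝ {a : Fin n // a ≠ z}).linearIndependent
  rw [hspan, finrank_span_eq_card hind]
  have hc : Fintype.card {a : Fin n // a ≠ z} = n - 1 := by
    have h := Fintype.card_subtype_compl (fun a : Fin n => a = z)
    rw [Fintype.card_subtype_eq, Fintype.card_fin] at h
    exact h
  exact hc

lemma finrank_H2 (hn : 2 ≤ n) :
    2 * Module.finrank ℝ (H2space n) = n * n - n := by
  set fam2 : {p : Fin n × Fin n // p.1 < p.2} → (Word n → ℝ) :=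
    fun p => xab p.1.1 p.1.2 with hfam2
  have hspan : (H2space n : Submodule ℝ (Word n → ℝ)) = Submodule.span ℝ (Set.range fam2) := by
    apply le_antisymm
    · intro F hF
      rw [H2_repr hF]
      refine Submodule.sum_mem _ fun a _ => Submodule.sum_mem _ fun b _ =>
        Submodule.smul_mem _ _ ?_
      rcases lt_trichotomy a b with h | rfl | h
      · exact Submodule.subset_span ⟨⟨(a, b), h⟩, rfl⟩
      · rw [xab_self]; exact Submodule.zero_mem _
      · rw [show xab a b = -xab b a from by rw [xab_swap a b, neg_neg]]
        exact Submodule.neg_mem _ (Submodule.subset_span ⟨⟨(b, a), h⟩, rfl⟩)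
    · rw [Submodule.span_le]
      rintro F ⟨p, rfl⟩
      exact xab_mem (ne_of_lt p.2)
  have hind : LinearIndependent ℝ fam2 := by
    set T : (Word n → ℝ) →ₗ[ℝ] ({p : Fin n × Fin n // p.1 < p.2} → ℝ) :=
      { toFun := fun F p => F [p.1.1, p.1.2]
        map_add' := fun _ _ => rfl
        map_smul' := fun _ _ => rfl } with hT
    apply LinearIndependent.of_comp T
    have heq : ⇑T ∘ fam2 = fun q : {p : Fin n × Fin n // p.1 < p.2} => (Pi.single q (1:ℝ)) := by
      funext q p
      show xab q.1.1 q.1.2 [p.1.1, p.1.2] = _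
      rw [xab_eval, Pi.single_apply]
      have h2 : (p.1.1 = q.1.2 ∧ p.1.2 = q.1.1) ↔ False := by
        constructor
        · rintro ⟨h1, h2⟩
          exact absurd (q.2.trans (h1 ▸ p.2)) (by rw [h2]; exact lt_irrefl _)
        · exact False.elim
      have h1 : (p.1.1 = q.1.1 ∧ p.1.2 = q.1.2) ↔ p = q := by
        constructor
        · rintro ⟨h1, h2⟩; exact Subtype.ext (Prod.ext h1 h2)
        · rintro rfl; exact ⟨rfl, rfl⟩
      simp [h1, h2]
    rw [heq, show (fun q : {p : Fin n × Fin n // p.1 < p.2} => (Pi.single q (1:ℝ) : _)) =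
        ⇑(Pi.basisFun ℝ {p : Fin n × Fin n // p.1 < p.2}) from
      funext fun q => (Pi.basisFun_apply ℝ _ q).symm]
    exact (Pi.basisFun ℝ {p : Fin n × Fin n // p.1 < p.2}).linearIndependent
  rw [hspan, finrank_span_eq_card hind]
  -- card computation
  have hcard : 2 * Fintype.card {p : Fin n × Fin n // p.1 < p.2} = n * n - n := by
    rw [Fintype.card_subtype]
    have hLG : (Finset.univ.filter fun p : Fin n × Fin n => p.1 < p.2).card
        = (Finset.univ.filter fun p : Fin n × Fin n => p.2 < p.1).card := by
      refine Finset.card_bij' (fun p _ => (p.2, p.1)) (fun p _ => (p.2, p.1)) ?_ ?_ ?_ ?_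
      · intro p hp; simpa using (Finset.mem_filter.mp hp).2
      · intro p hp; simpa using (Finset.mem_filter.mp hp).2
      · intro p _; rfl
      · intro p _; rfl
    have hunion : (Finset.univ.filter fun p : Fin n × Fin n => p.1 < p.2)
        ∪ (Finset.univ.filter fun p : Fin n × Fin n => p.2 < p.1)
        = Finset.univ.filter fun p : Fin n × Fin n => p.1 ≠ p.2 := by
      ext p
      simp only [Finset.mem_union, Finset.mem_filter, Finset.mem_univ, true_and]
      constructor
      · rintro (h | h); exacts [ne_of_lt h, (ne_of_lt h).symm]
      · exact fun h => lt_or_gt_of_ne h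
    have hdisj : Disjoint (Finset.univ.filter fun p : Fin n × Fin n => p.1 < p.2)
        (Finset.univ.filter fun p : Fin n × Fin n => p.2 < p.1) := by
      rw [Finset.disjoint_left]
      intro p hp hq
      exact absurd (Finset.mem_filter.mp hq).2 (asymm (Finset.mem_filter.mp hp).2)
    have hN : (Finset.univ.filter fun p : Fin n × Fin n => p.1 ≠ p.2).card = n * n - n := by
      have hdiag : (Finset.univ.filter fun p : Fin n × Fin n => p.1 = p.2)
          = Finset.univ.image fun a : Fin n => (a, a) := by
        ext ⟨x, y⟩
        simp only [Finset.mem_filter, Finset.mem_univ, true_and, Finset.mem_image]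
        constructor
        · rintro rfl; exact ⟨x, rfl⟩
        · rintro ⟨a, h⟩
          simp only [Prod.mk.injEq] at h
          rw [← h.1, ← h.2]
      have h1 : (Finset.univ.filter fun p : Fin n × Fin n => p.1 = p.2).card = n := by
        rw [hdiag, Finset.card_image_of_injective _ (fun a b h => (Prod.ext_iff.mp h).1),
          Finset.card_univ, Fintype.card_fin]
      have h2 := Finset.card_filter_add_card_filter_not
        (s := (Finset.univ : Finset (Fin n × Fin n))) (p := fun p => p.1 = p.2)
      rw [Finset.card_univ, Fintype.card_prod, Fintype.card_fin] at h2
      have h3 : (Finset.univ.filter fun p : Fin n × Fin n => ¬ p.1 = p.2)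
          = Finset.univ.filter fun p : Fin n × Fin n => p.1 ≠ p.2 := rfl
      rw [h3, h1] at h2
      omega
    have := Finset.card_union_of_disjoint hdisj
    rw [hunion, hN] at this
    omega
  omega

end Aux8
section Aux9
variable {n : ℕ}

lemma finrank_H22 (hn : 2 ≤ n) : Module.finrank ℝ (H22 n) = (n - 1) * (n - 2) / 2 := by
  have hfin1 : FiniteDimensional ℝ (H21 n) :=
    FiniteDimensional.span_of_finite ℝ (Set.finite_range _)
  have hfin2 : FiniteDimensional ℝ (H22 n) :=
    FiniteDimensional.span_of_finite ℝ
      (Set.Finite.subset (Set.finite_range fun p : Fin n × Fin n => fvec p.1 p.2)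
        (by rintro F ⟨a, b, -, rfl⟩; exact ⟨(a, b), rfl⟩))
  have hkey := Submodule.finrank_sup_add_finrank_inf_eq (H21 n) (H22 n)
  rw [sup_eq, inf_eq, finrank_bot, add_zero, finrank_H21 hn] at hkey
  have hD := finrank_H2 hn
  obtain ⟨k, rfl⟩ : ∃ k, n = k + 2 := ⟨n - 2, by omega⟩
  have hA : (k+2) * (k+2) - (k+2) = (k+1)*k + 2*(k+1) := Nat.sub_eq_of_eq_add (by ring)
  rw [hA] at hD
  have hgoal : (k+2-1)*(k+2-2) = (k+1)*k := by norm_num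
  rw [hgoal]
  set P := (k+1)*k with hP
  omega

theorem H2_decomposition' (hn : 2 ≤ n) :
    (∀ F ∈ H21 n, ∀ G ∈ H22 n, ∑ π ∈ gamma2 n, F π * G π = 0) ∧
    H21 n ⊓ H22 n = ⊥ ∧
    H21 n ⊔ H22 n = H2space n ∧
    Module.finrank ℝ (H21 n) = n - 1 ∧
    Module.finrank ℝ (H22 n) = (n - 1) * (n - 2) / 2 ∧
    (H21 n : Set (Word n → ℝ)) =
      {F : Word n → ℝ | ∃ s : Fin n → ℝ,
        F = ∑ i : Fin n, ∑ j : Fin n, (if i < j then (s i - s j) • xab i j else 0)} :=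
  ⟨fun _ hF _ hG => orth hF hG, inf_eq, sup_eq, finrank_H21 hn, finrank_H22 hn, H21_carrier_eq⟩

end Aux9

/-- **Explicit orthogonal decomposition of pairwise rank information:**
`H²₁ ⊥ H²₂` (w.r.t. `⟨F,G⟩ = Σ_{π∈Γ²} F π · G π`), `H² = H²₁ ⊕ H²₂`,
`dim H²₁ = n−1`, `dim H²₂ = (n−1)(n−2)/2`, and `H²₁` is the space of gradient edge flows. -/
theorem H2_decomposition {n : ℕ} (hn : 2 ≤ n) :
    (∀ F ∈ H21 n, ∀ G ∈ H22 n, ∑ π ∈ gamma2 n, F π * G π = 0) ∧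
    H21 n ⊓ H22 n = ⊥ ∧
    H21 n ⊔ H22 n = H2space n ∧
    Module.finrank ℝ (H21 n) = n - 1 ∧
    Module.finrank ℝ (H22 n) = (n - 1) * (n - 2) / 2 ∧
    (H21 n : Set (Word n → ℝ)) =
      {F : Word n → ℝ | ∃ s : Fin n → ℝ,
        F = ∑ i : Fin n, ∑ j : Fin n, (if i < j then (s i - s j) • xab i j else 0)} := by
  exact H2_decomposition' hn
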